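/- arXiv:2203.11255 — 2 statements merged into one kernel-verified Lean document; each statement's English description precedes it below -/
import Mathlib

section
/- Let $B_F = \{k \in \mathbb{Z}^3 : |k| \le k_F\}$ and $N = |B_F|$. Then the sum of $|k|^2$ over $k \in B_F$ is bounded above and below by positive constants times $N^{5/3}$, i.e., there exist constants $c, C > 0$ (independent of $k_F \ge 1$) such that $c N^{5/3} \le \sum_{k \in B_F} |k|^2 \le C N^{5/3}$. -/
open Finset

theorem aux_sq_sum (m : ℕ) : ((m:ℝ)^3)/3 ≤ ∑ j ∈ Finset.Icc (1:ℤ) (m:ℤ), (j:ℝ)^2 := by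
  induction m with
  | zero => simp
  | succ n ih =>
    have h : Finset.Icc (1:ℤ) ((n+1:ℕ):ℤ) = insert ((n:ℤ)+1) (Finset.Icc (1:ℤ) (n:ℤ)) := by
      ext x; simp [Finset.mem_Icc, Finset.mem_insert]; omega
    rw [h, Finset.sum_insert (by simp)]
    push_cast at ih ⊢
    nlinarith [ih, (Nat.cast_nonneg n : (0:ℝ) ≤ n)]

theorem aux_cube_sum (I : Finset ℤ) :
    ∑ k ∈ I ×ˢ I ×ˢ I, ((k.1:ℝ)^2 + (k.2.1:ℝ)^2 + (k.2.2:ℝ)^2)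
      = 3 * (I.card:ℝ)^2 * ∑ j ∈ I, (j:ℝ)^2 := by
  simp only [Finset.sum_product, Finset.sum_add_distrib, Finset.sum_const,
    nsmul_eq_mul, Finset.mul_sum, Finset.sum_mul, Finset.card_product]
  push_cast
  rw [← Finset.sum_add_distrib, ← Finset.sum_add_distrib]
  apply Finset.sum_congr rfl
  intro x _
  ring

theorem aux_Icc_card (m : ℕ) : ((Finset.Icc (1:ℤ) (m:ℤ)).card : ℝ) = (m:ℝ) := by
  rw [Int.card_Icc]
  have : ((m:ℤ) + 1 - 1) = (m : ℕ) := by omega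
  rw [this, Int.toNat_natCast]

theorem aux_cube_lb (m : ℕ) :
    (m:ℝ)^5 ≤ ∑ k ∈ (Finset.Icc (1:ℤ) (m:ℤ)) ×ˢ (Finset.Icc (1:ℤ) (m:ℤ)) ×ˢ
      (Finset.Icc (1:ℤ) (m:ℤ)), ((k.1:ℝ)^2 + (k.2.1:ℝ)^2 + (k.2.2:ℝ)^2) := by
  rw [aux_cube_sum, aux_Icc_card]
  nlinarith [aux_sq_sum m, sq_nonneg ((m:ℝ))]

theorem aux_symm_card (m : ℕ) :
    (((Finset.Icc (-(m:ℤ)) (m:ℤ)) ×ˢ (Finset.Icc (-(m:ℤ)) (m:ℤ)) ×ˢ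
      (Finset.Icc (-(m:ℤ)) (m:ℤ))).card : ℝ) = (2*(m:ℝ)+1)^3 := by
  have h : ((Finset.Icc (-(m:ℤ)) (m:ℤ)).card : ℝ) = 2*(m:ℝ)+1 := by
    rw [Int.card_Icc]
    have : ((m:ℤ) + 1 - (-(m:ℤ))) = (2*m+1 : ℕ) := by push_cast; ring
    rw [this, Int.toNat_natCast]; push_cast; ring
  simp only [Finset.card_product]; push_cast; rw [h]; ring

/-- Kinetic energy of the free Fermi ball: the sum of `|k|^2` over lattice points
`k ∈ ℤ³` with `|k| ≤ k_F` is comparable to `N^(5/3)` where `N` is the number of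
lattice points in the Fermi ball. -/
theorem fermi_ball_kinetic_energy :
    ∃ c C : ℝ, 0 < c ∧ 0 < C ∧
      ∀ kF : ℝ, 1 ≤ kF →
        ∀ S : Finset (ℤ × ℤ × ℤ),
          (∀ k : ℤ × ℤ × ℤ, k ∈ S ↔
            ((k.1 : ℝ) ^ 2 + (k.2.1 : ℝ) ^ 2 + (k.2.2 : ℝ) ^ 2 ≤ kF ^ 2)) →
          c * (S.card : ℝ) ^ ((5 : ℝ) / 3) ≤
              ∑ k ∈ S, ((k.1 : ℝ) ^ 2 + (k.2.1 : ℝ) ^ 2 + (k.2.2 : ℝ) ^ 2) ∧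
            ∑ k ∈ S, ((k.1 : ℝ) ^ 2 + (k.2.1 : ℝ) ^ 2 + (k.2.2 : ℝ) ^ 2) ≤
              C * (S.card : ℝ) ^ ((5 : ℝ) / 3) := by
  refine ⟨(497664:ℝ)⁻¹, 4, by norm_num, by norm_num, ?_⟩
  intro kF hkF S hS
  have hkF0 : (0:ℝ) < kF := lt_of_lt_of_le one_pos hkF
  have hfnn : ∀ k : ℤ×ℤ×ℤ, 0 ≤ (k.1:ℝ)^2 + (k.2.1:ℝ)^2 + (k.2.2:ℝ)^2 :=
    fun k => by positivity
  obtain ⟨m, hm1, hm2⟩ : ∃ m : ℕ, (m:ℝ) ≤ kF/2 ∧ kF/2 < (m:ℝ)+1 :=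
    ⟨⌊kF/2⌋₊, Nat.floor_le (by positivity), Nat.lt_floor_add_one _⟩
  -- the symmetric cube is contained in S
  have hsmall : ∀ x : ℤ, x ∈ Finset.Icc (-(m:ℤ)) (m:ℤ) → (x:ℝ)^2 ≤ (kF/2)^2 := by
    intro x hx
    rw [Finset.mem_Icc] at hx
    have h1 : -((m:ℝ)) ≤ (x:ℝ) := by exact_mod_cast hx.1
    have h2 : (x:ℝ) ≤ (m:ℝ) := by exact_mod_cast hx.2
    nlinarith [hm1, hkF0.le]
  have hJS : (Finset.Icc (-(m:ℤ)) (m:ℤ)) ×ˢ (Finset.Icc (-(m:ℤ)) (m:ℤ)) ×ˢ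
      (Finset.Icc (-(m:ℤ)) (m:ℤ)) ⊆ S := by
    intro k hk
    simp only [Finset.mem_product] at hk
    rw [hS]
    have h1 := hsmall _ hk.1
    have h2 := hsmall _ hk.2.1
    have h3 := hsmall _ hk.2.2
    nlinarith [hkF0.le]
  -- the positive cube is contained in S
  have hIS : (Finset.Icc (1:ℤ) (m:ℤ)) ×ˢ (Finset.Icc (1:ℤ) (m:ℤ)) ×ˢ
      (Finset.Icc (1:ℤ) (m:ℤ)) ⊆ S := by
    intro k hk
    simp only [Finset.mem_product, Finset.mem_Icc] at hk
    apply hJS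
    simp only [Finset.mem_product, Finset.mem_Icc]
    omega
  -- lower bound on N : kF^3 ≤ 8 N
  have hNlow : kF^3 ≤ 8 * (S.card : ℝ) := by
    have hc : (((Finset.Icc (-(m:ℤ)) (m:ℤ)) ×ˢ (Finset.Icc (-(m:ℤ)) (m:ℤ)) ×ˢ
        (Finset.Icc (-(m:ℤ)) (m:ℤ))).card : ℝ) ≤ (S.card : ℝ) := by
      exact_mod_cast Finset.card_le_card hJS
    rw [aux_symm_card] at hc
    have h4 : kF/2 < 2*(m:ℝ)+1 := by linarith
    have h5 : (kF/2)^3 ≤ (2*(m:ℝ)+1)^3 := pow_le_pow_left₀ (by positivity) h4.le 3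
    nlinarith [h5, hc]
  -- upper bound on N : N ≤ (3 kF)^3
  have hNup : (S.card : ℝ) ≤ (3*kF)^3 := by
    obtain ⟨a, ha1, haR, haR2⟩ : ∃ a : ℤ, (1:ℤ) ≤ a ∧ (a:ℝ) ≤ kF ∧
        ∀ y : ℝ, y ≤ kF → ∀ x : ℤ, (x:ℝ) ≤ y → x ≤ a := by
      refine ⟨⌊kF⌋, by exact_mod_cast Int.le_floor.mpr (by exact_mod_cast hkF),
        Int.floor_le kF, ?_⟩
      intro y hy x hx
      exact Int.le_floor.mpr (le_trans hx hy)
    have hSK : S ⊆ (Finset.Icc (-a) a) ×ˢ (Finset.Icc (-a) a) ×ˢ (Finset.Icc (-a) a) := by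
      intro k hk
      rw [hS] at hk
      have hco : ∀ x : ℤ, (x:ℝ)^2 ≤ kF^2 → x ∈ Finset.Icc (-a) a := by
        intro x hx
        have h1 : (x:ℝ) ≤ kF := by nlinarith
        have h2 : -kF ≤ (x:ℝ) := by nlinarith
        have h3 : x ≤ a := haR2 kF le_rfl x h1
        have h4 : -x ≤ a := haR2 kF le_rfl (-x) (by push_cast; linarith)
        rw [Finset.mem_Icc]; omega
      simp only [Finset.mem_product]
      refine ⟨hco _ (by nlinarith [sq_nonneg ((k.2.1:ℝ)), sq_nonneg ((k.2.2:ℝ))]),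
        hco _ (by nlinarith [sq_nonneg ((k.1:ℝ)), sq_nonneg ((k.2.2:ℝ))]),
        hco _ (by nlinarith [sq_nonneg ((k.1:ℝ)), sq_nonneg ((k.2.1:ℝ))])⟩
    have hc : (S.card : ℝ) ≤ (((Finset.Icc (-a) a) ×ˢ (Finset.Icc (-a) a) ×ˢ
        (Finset.Icc (-a) a)).card : ℝ) := by
      exact_mod_cast Finset.card_le_card hSK
    have hKcard : ((Finset.Icc (-a) a).card : ℝ) = 2*(a:ℝ)+1 := by
      rw [Int.card_Icc]
      have h2 : (0:ℤ) ≤ a + 1 - (-a) := by omega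
      rw [show ((a + 1 - (-a) : ℤ).toNat : ℝ) = ((a+1-(-a) : ℤ) : ℝ) by
        exact_mod_cast Int.toNat_of_nonneg h2]
      push_cast; ring
    have hcc : (((Finset.Icc (-a) a) ×ˢ (Finset.Icc (-a) a) ×ˢ
        (Finset.Icc (-a) a)).card : ℝ) = (2*(a:ℝ)+1)^3 := by
      simp only [Finset.card_product]; push_cast; rw [hKcard]; ring
    rw [hcc] at hc
    have haR1 : (1:ℝ) ≤ (a:ℝ) := by exact_mod_cast ha1
    have h6 : 2*(a:ℝ)+1 ≤ 3*kF := by linarith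
    have h7 : (2*(a:ℝ)+1)^3 ≤ (3*kF)^3 := pow_le_pow_left₀ (by linarith) h6 3
    linarith
  have hN0 : (0:ℝ) < (S.card : ℝ) := by
    nlinarith [hNlow, hkF, sq_nonneg (kF-1), sq_nonneg kF]
  -- sum lower bounds
  have hsum_lb1 : (m:ℝ)^5 ≤ ∑ k ∈ S, ((k.1:ℝ)^2 + (k.2.1:ℝ)^2 + (k.2.2:ℝ)^2) :=
    le_trans (aux_cube_lb m)
      (Finset.sum_le_sum_of_subset_of_nonneg hIS (fun k _ _ => hfnn k))
  have hsum_lb2 : (2:ℝ) ≤ ∑ k ∈ S, ((k.1:ℝ)^2 + (k.2.1:ℝ)^2 + (k.2.2:ℝ)^2) := by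
    have hpair : ({((1:ℤ),(0:ℤ),(0:ℤ)), ((-1:ℤ),(0:ℤ),(0:ℤ))} : Finset (ℤ×ℤ×ℤ)) ⊆ S := by
      intro k hk
      simp only [Finset.mem_insert, Finset.mem_singleton] at hk
      rcases hk with h | h <;> (rw [hS, h]; push_cast; nlinarith [hkF])
    have := Finset.sum_le_sum_of_subset_of_nonneg hpair (fun k _ _ => hfnn k)
    rw [Finset.sum_pair (by decide)] at this
    push_cast at this
    norm_num at this
    linarith
  -- combined: kF^5 ≤ 2048 * sum
  have hkF5 : kF^5 ≤ 2048 * ∑ k ∈ S, ((k.1:ℝ)^2 + (k.2.1:ℝ)^2 + (k.2.2:ℝ)^2) := by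
    have h32 : ((m:ℝ)+1)^5 ≤ 32 * ((m:ℝ)^5 + 2) := by
      rcases Nat.eq_zero_or_pos m with h | h
      · rw [h]; norm_num
      · have h1 : (1:ℝ) ≤ (m:ℝ) := by exact_mod_cast h
        have h2 := pow_le_pow_left₀ (by positivity : (0:ℝ) ≤ (m:ℝ)+1)
          (show (m:ℝ)+1 ≤ 2*(m:ℝ) by linarith) 5
        nlinarith [h2]
    have hk2 : kF < 2*((m:ℝ)+1) := by linarith
    have h5 : kF^5 ≤ 32 * ((m:ℝ)+1)^5 := by
      have := pow_le_pow_left₀ hkF0.le hk2.le 5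
      nlinarith [this]
    nlinarith [h5, h32, hsum_lb1, hsum_lb2]
  -- rpow computations
  have hrw1 : ((S.card:ℝ)) ^ ((5:ℝ)/3) ≤ (3*kF)^5 := by
    have h1 : ((S.card:ℝ)) ^ ((5:ℝ)/3) ≤ ((3*kF)^3) ^ ((5:ℝ)/3) :=
      Real.rpow_le_rpow hN0.le hNup (by norm_num)
    have h2 : ((3*kF)^3 : ℝ) ^ ((5:ℝ)/3) = (3*kF)^5 := by
      rw [← Real.rpow_natCast (3*kF) 3, ← Real.rpow_mul (by positivity)]
      norm_num
    rw [h2] at h1; exact h1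
  have hrw2 : kF^2 ≤ 4 * ((S.card:ℝ)) ^ ((2:ℝ)/3) := by
    have h1 : (kF^3 : ℝ) ^ ((2:ℝ)/3) ≤ (8*(S.card:ℝ)) ^ ((2:ℝ)/3) :=
      Real.rpow_le_rpow (by positivity) hNlow (by norm_num)
    have h2 : (kF^3 : ℝ) ^ ((2:ℝ)/3) = kF^2 := by
      rw [← Real.rpow_natCast kF 3, ← Real.rpow_mul hkF0.le]
      norm_num
    have h3 : ((8:ℝ)*(S.card:ℝ)) ^ ((2:ℝ)/3) = 4 * ((S.card:ℝ)) ^ ((2:ℝ)/3) := by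
      rw [Real.mul_rpow (by norm_num) hN0.le]
      congr 1
      rw [show (8:ℝ) = 2^(3:ℕ) by norm_num, ← Real.rpow_natCast 2 3,
        ← Real.rpow_mul (by norm_num)]
      norm_num
    rw [h2, h3] at h1; exact h1
  have hsplit : (S.card:ℝ) * ((S.card:ℝ)) ^ ((2:ℝ)/3) = ((S.card:ℝ)) ^ ((5:ℝ)/3) := by
    nth_rewrite 1 [← Real.rpow_one ((S.card:ℝ))]
    rw [← Real.rpow_add hN0]
    norm_num
  constructor
  · -- lower bound
    rw [inv_mul_le_iff₀ (by norm_num : (0:ℝ) < 497664)]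
    calc ((S.card:ℝ)) ^ ((5:ℝ)/3) ≤ (3*kF)^5 := hrw1
      _ = 243 * kF^5 := by ring
      _ ≤ 243 * (2048 * ∑ k ∈ S, ((k.1:ℝ)^2 + (k.2.1:ℝ)^2 + (k.2.2:ℝ)^2)) := by
          nlinarith [hkF5]
      _ = 497664 * ∑ k ∈ S, ((k.1:ℝ)^2 + (k.2.1:ℝ)^2 + (k.2.2:ℝ)^2) := by ring
  · -- upper bound
    have h1 : ∑ k ∈ S, ((k.1:ℝ)^2 + (k.2.1:ℝ)^2 + (k.2.2:ℝ)^2) ≤ (S.card:ℝ) * kF^2 := by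
      calc ∑ k ∈ S, ((k.1:ℝ)^2 + (k.2.1:ℝ)^2 + (k.2.2:ℝ)^2)
          ≤ ∑ _k ∈ S, kF^2 := Finset.sum_le_sum (fun k hk => (hS k).mp hk)
        _ = (S.card:ℝ) * kF^2 := by rw [Finset.sum_const, nsmul_eq_mul]
    calc ∑ k ∈ S, ((k.1:ℝ)^2 + (k.2.1:ℝ)^2 + (k.2.2:ℝ)^2) ≤ (S.card:ℝ) * kF^2 := h1
      _ ≤ (S.card:ℝ) * (4 * ((S.card:ℝ)) ^ ((2:ℝ)/3)) :=
          mul_le_mul_of_nonneg_left hrw2 hN0.le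
      _ = 4 * ((S.card:ℝ) * ((S.card:ℝ)) ^ ((2:ℝ)/3)) := by ring
      _ = 4 * ((S.card:ℝ)) ^ ((5:ℝ)/3) := by rw [hsplit]
end

section
/- Let $D, W, \widetilde{W}$ be real symmetric $n \times n$ matrices with $D + W - \widetilde{W}$ and $D + W + \widetilde{W}$ positive definite. Define $E := [(D+W-\widetilde{W})^{1/2}(D+W+\widetilde{W})(D+W-\widetilde{W})^{1/2}]^{1/2}$ and $S := (D+W-\widetilde{W})^{1/2}E^{-1/2}$. Then $S$ is invertible and $S^{\intercal}(D+W+\widetilde{W})S = E$ and $S^{-1}(D+W-\widetilde{W})(S^{-1})^{\intercal} = E$; i.e., $S$ simultaneously congruence-diagonalizes the two positive matrices $D+W\pm\widetilde{W}$ to the same matrix $E$. -/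
open Matrix

open scoped ComplexOrder in
noncomputable def Matrix.PosSemidef.sqrt {n : Type*} [Fintype n] [DecidableEq n] {𝕜 : Type*}
    [RCLike 𝕜] {A : Matrix n n 𝕜} (hA : A.PosSemidef) : Matrix n n 𝕜 :=
  hA.1.eigenvectorUnitary.1 * diagonal ((↑) ∘ (√·) ∘ hA.1.eigenvalues) *
  (star hA.1.eigenvectorUnitary : Matrix n n 𝕜)

open scoped ComplexOrder in
lemma Matrix.PosSemidef.posSemidef_sqrt {n : Type*} [Fintype n] [DecidableEq n] {𝕜 : Type*}
    [RCLike 𝕜] {A : Matrix n n 𝕜} (hA : A.PosSemidef) : hA.sqrt.PosSemidef := by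
  have hd : (diagonal ((↑) ∘ (√·) ∘ hA.1.eigenvalues) : Matrix n n 𝕜).PosSemidef :=
    PosSemidef.diagonal fun i => RCLike.ofReal_nonneg.2 (Real.sqrt_nonneg _)
  have := hd.mul_mul_conjTranspose_same (hA.1.eigenvectorUnitary : Matrix n n 𝕜)
  unfold Matrix.PosSemidef.sqrt
  simpa [star_eq_conjTranspose] using this

open scoped ComplexOrder in
lemma Matrix.PosSemidef.sqrt_mul_self {n : Type*} [Fintype n] [DecidableEq n] {𝕜 : Type*}
    [RCLike 𝕜] {A : Matrix n n 𝕜} (hA : A.PosSemidef) : hA.sqrt * hA.sqrt = A := by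
  have key : diagonal (((↑) ∘ (√·) ∘ hA.1.eigenvalues) : n → 𝕜) *
      diagonal ((↑) ∘ (√·) ∘ hA.1.eigenvalues) = diagonal (RCLike.ofReal ∘ hA.1.eigenvalues) := by
    rw [diagonal_mul_diagonal]; congr 1; funext i
    simp only [Function.comp_apply, ← RCLike.ofReal_mul,
      Real.mul_self_sqrt (hA.eigenvalues_nonneg i)]
  conv_rhs => rw [hA.1.spectral_theorem, Unitary.conjStarAlgAut_apply, ← key]
  unfold Matrix.PosSemidef.sqrt
  have hU : (star hA.1.eigenvectorUnitary : Matrix n n 𝕜) * hA.1.eigenvectorUnitary.1 = 1 :=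
    Unitary.coe_star_mul_self _
  simp only [Matrix.mul_assoc]
  rw [← Matrix.mul_assoc (star hA.1.eigenvectorUnitary : Matrix n n 𝕜), hU, Matrix.one_mul]

lemma posDef_sqrt_of_posDef {m : Type*} [Fintype m] [DecidableEq m]
    {A : Matrix m m ℝ} (hA : A.PosDef) : hA.posSemidef.sqrt.PosDef := by
  have hs := hA.posSemidef.posSemidef_sqrt
  refine posDef_iff_dotProduct_mulVec.2 ⟨hs.1, fun x hx => ?_⟩
  set R := hA.posSemidef.sqrt with hRdef
  set Q := hs.sqrt with hQdef
  have hQQ : Q * Q = R := hs.sqrt_mul_self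
  have hQH : Qᴴ = Q := hs.posSemidef_sqrt.1
  have key : star x ⬝ᵥ R *ᵥ x = star (Q *ᵥ x) ⬝ᵥ (Q *ᵥ x) := by
    rw [← hQQ, ← mulVec_mulVec, star_mulVec, hQH, dotProduct_mulVec]
  have hQx : Q *ᵥ x ≠ 0 := by
    intro h0
    have hRR : R * R = A := hA.posSemidef.sqrt_mul_self
    have hRx : R *ᵥ x = 0 := by
      rw [← hQQ, ← mulVec_mulVec, h0, mulVec_zero]
    have hAx : A *ᵥ x = 0 := by
      rw [← hRR, ← mulVec_mulVec, hRx, mulVec_zero]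
    have := hA.dotProduct_mulVec_pos hx
    rw [hAx, dotProduct_zero] at this
    exact lt_irrefl _ this
  rw [key]
  rcases (dotProduct_star_self_nonneg (Q *ᵥ x)).lt_or_eq with h | h
  · exact h
  · exact absurd (dotProduct_star_self_eq_zero.mp h.symm) hQx

/-- Simultaneous congruence diagonalization underlying the Bogoliubov
diagonalization of the RPA effective Hamiltonian: for real symmetric `D, W, W̃`
with `D + W ∓ W̃` positive definite, `E = [(D+W-W̃)^{1/2}(D+W+W̃)(D+W-W̃)^{1/2}]^{1/2}`
and `S = (D+W-W̃)^{1/2} E^{-1/2}`, the matrix `S` is invertible and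
`Sᵀ (D+W+W̃) S = E` and `S⁻¹ (D+W-W̃) (S⁻¹)ᵀ = E`. -/
theorem rpa_congruence_diagonalization {n : ℕ}
    (D W Wt : Matrix (Fin n) (Fin n) ℝ)
    (hD : D.IsSymm) (hW : W.IsSymm) (hWt : Wt.IsSymm)
    (h1 : (D + W - Wt).PosDef) (h2 : (D + W + Wt).PosDef)
    (E : Matrix (Fin n) (Fin n) ℝ) (hE : E.PosDef)
    (hEsq : E * E = h1.posSemidef.sqrt * (D + W + Wt) * h1.posSemidef.sqrt)
    (S : Matrix (Fin n) (Fin n) ℝ)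
    (hS : S = h1.posSemidef.sqrt * (hE.posSemidef.sqrt)⁻¹) :
    IsUnit S ∧ Sᵀ * (D + W + Wt) * S = E ∧ S⁻¹ * (D + W - Wt) * (S⁻¹)ᵀ = E := by
  set A := D + W - Wt with hA
  set B := D + W + Wt with hB
  set R := h1.posSemidef.sqrt with hRdef
  set F := hE.posSemidef.sqrt with hFdef
  have hRpd : R.PosDef := posDef_sqrt_of_posDef h1
  have hFpd : F.PosDef := posDef_sqrt_of_posDef hE
  have hRu : IsUnit R := hRpd.isUnit
  have hFu : IsUnit F := hFpd.isUnit
  have hRd : IsUnit R.det := (Matrix.isUnit_iff_isUnit_det R).1 hRu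
  have hFd : IsUnit F.det := (Matrix.isUnit_iff_isUnit_det F).1 hFu
  have hRT : Rᵀ = R := h1.posSemidef.posSemidef_sqrt.1
  have hFT : Fᵀ = F := hE.posSemidef.posSemidef_sqrt.1
  have hRR : R * R = A := h1.posSemidef.sqrt_mul_self
  have hFF : F * F = E := hE.posSemidef.sqrt_mul_self
  have hSu : IsUnit S := by
    rw [hS]
    exact hRu.mul ((Matrix.isUnit_nonsing_inv_iff).2 hFu)
  refine ⟨hSu, ?_, ?_⟩
  · have hST : Sᵀ = F⁻¹ * R := by
      rw [hS, transpose_mul, Matrix.transpose_nonsing_inv, hFT, hRT]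
    rw [hST, hS]
    calc F⁻¹ * R * B * (R * F⁻¹) = F⁻¹ * (R * B * R) * F⁻¹ := by
          simp only [Matrix.mul_assoc]
      _ = F⁻¹ * (E * E) * F⁻¹ := by rw [← hEsq]
      _ = F⁻¹ * (F * (F * F) * F) * F⁻¹ := by
          simp only [← hFF, Matrix.mul_assoc]
      _ = (F⁻¹ * F) * (F * F) * (F * F⁻¹) := by simp only [Matrix.mul_assoc]
      _ = E := by rw [Matrix.nonsing_inv_mul F hFd, Matrix.mul_nonsing_inv F hFd,
            Matrix.one_mul, Matrix.mul_one, hFF]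
  · have hSi : S⁻¹ = F * R⁻¹ := by
      rw [hS, Matrix.mul_inv_rev, Matrix.nonsing_inv_nonsing_inv F hFd]
    have hSiT : (S⁻¹)ᵀ = R⁻¹ * F := by
      rw [hSi, transpose_mul, Matrix.transpose_nonsing_inv, hRT, hFT]
    rw [hSiT, hSi]
    calc F * R⁻¹ * A * (R⁻¹ * F) = F * (R⁻¹ * (R * R) * R⁻¹) * F := by
          rw [← hRR]; simp only [Matrix.mul_assoc]
      _ = F * ((R⁻¹ * R) * (R * R⁻¹)) * F := by simp only [Matrix.mul_assoc]
      _ = E := by rw [Matrix.nonsing_inv_mul R hRd, Matrix.mul_nonsing_inv R hRd,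
            Matrix.one_mul, Matrix.mul_one, hFF]
end
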